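/- Let A_{i,j} ∈ ℝ^m, i = 1,...,q, j = 1,...,n_i+1, be points whose set of coordinates is algebraically independent over ℚ. Let 0 ≤ t ≤ d ≤ T ≤ m and let Π^d be a d-plane in ℝ^m parallel to coordinate planes Π^t ⊂ Π^T (meaning Π^t is contained in the direction space of Π^d which is contained in Π^T). If q ≤ d − t + 1 and n₁ + ... + n_q + 1 ≤ (m − T)(q − 1), then there exists i ∈ {1,...,q} such that Π^d does not meet the affine hull of M_i = {A_{i,1},...,A_{i,n_i+1}}. -/

import Mathlib

/-- The coordinate subspace of `ℝ^m` spanned by the first `T` standard basis vectors. -/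
def coordSub (m T : ℕ) : Submodule ℝ (Fin m → ℝ) where
  carrier := {x | ∀ s : Fin m, T ≤ (s : ℕ) → x s = 0}
  add_mem' := by
    intro a b ha hb s hs
    simp [ha s hs, hb s hs]
  zero_mem' := by intro s _; rfl
  smul_mem' := by
    intro c x hx s hs
    simp [hx s hs]



open MvPolynomial Matrix

open MvPolynomial Matrix

abbrev Vix (m : ℕ) {q : ℕ} (n : Fin q → ℕ) := Σ i : Fin q, Fin (n i + 1) × Fin m

abbrev Blk (m T : ℕ) {q : ℕ} (n : Fin q → ℕ) := {i : Fin q // n i ≤ m - T}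

abbrev Cix (m T : ℕ) {q : ℕ} (n : Fin q → ℕ) := (Σ i : Blk m T n, Fin (n i.1 + 1)) ⊕ Unit

section Aux

variable {q : ℕ} {m T : ℕ} {n : Fin q → ℕ}

noncomputable def affRow (i : Blk m T n) : Cix m T n → MvPolynomial (Vix m n) ℚ :=
  Sum.elim (fun p => if p.1 = i then 1 else 0) (fun _ => 1)

noncomputable def tailRow (i₀ i : Blk m T n) (s : Fin m) :
    Cix m T n → MvPolynomial (Vix m n) ℚ :=
  Sum.elim (fun p => (if p.1 = i then X ⟨p.1.1, p.2, s⟩ else 0)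
      - (if p.1 = i₀ then X ⟨p.1.1, p.2, s⟩ else 0)) (fun _ => 0)

noncomputable def Emat (i₀ : Blk m T n) (bb : ℕ → Blk m T n) (eF : ℕ → Fin m)
    (sOwn : Blk m T n → ℕ → Fin m) :
    Matrix (Cix m T n) (Cix m T n) (MvPolynomial (Vix m n) ℚ) :=
  fun r => Sum.elim (fun p =>
      if p.2.val = 0 then affRow p.1
      else if p.1 = i₀ then tailRow i₀ (bb p.2.val) (eF p.2.val)
      else tailRow i₀ p.1 (sOwn p.1 p.2.val))
    (fun _ => tailRow i₀ (bb 0) (eF 0)) r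

def sig (i₀ : Blk m T n) (bb : ℕ → Blk m T n) (eF : ℕ → Fin m)
    (sOwn : Blk m T n → ℕ → Fin m) : Vix m n → ℚ := fun v =>
  if h : n v.1 ≤ m - T then
    if (⟨v.1, h⟩ : Blk m T n) = i₀ then (if v.2.2 = eF v.2.1.val then 1 else 0)
    else if 1 ≤ v.2.1.val ∧ v.2.2 = sOwn ⟨v.1, h⟩ v.2.1.val then 1 else 0
  else 0

lemma sig_apply (i₀ : Blk m T n) (bb : ℕ → Blk m T n) (eF : ℕ → Fin m)
    (sOwn : Blk m T n → ℕ → Fin m) (i : Blk m T n) (j : Fin (n i.1 + 1)) (s : Fin m) :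
    sig i₀ bb eF sOwn ⟨i.1, j, s⟩ =
      if i = i₀ then (if s = eF j.val then 1 else 0)
      else if 1 ≤ j.val ∧ s = sOwn i j.val then 1 else 0 := by
  have h : n i.1 ≤ m - T := i.2
  simp only [sig, dif_pos h]

-- helper
lemma sigma_indicator_sum {R : Type*} [AddCommMonoid R] {ι : Type*} [Fintype ι] [DecidableEq ι]
    {β : ι → Type*} [∀ i, Fintype (β i)] (i : ι) (F : (Σ i, β i) → R) :
    (∑ p : Σ i', β i', if p.1 = i then F p else 0) = ∑ j : β i, F ⟨i, j⟩ := by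
  rw [← Finset.univ_sigma_univ, Finset.sum_sigma]
  rw [Finset.sum_eq_single i]
  · simp
  · intro b _ hb
    simp [hb]
  · simp

variable {R : Type*} [CommRing R] [Algebra ℚ R]

lemma sum_affRow (g : Vix m n → R) (v : Cix m T n → R) (i : Blk m T n) :
    ∑ c, (aeval g) (affRow i c) * v c
      = (∑ j, v (Sum.inl ⟨i, j⟩)) + v (Sum.inr ()) := by
  rw [Fintype.sum_sum_type]
  have h1 : ∀ p : Σ i' : Blk m T n, Fin (n i'.1 + 1),
      (aeval g) (affRow i (Sum.inl p)) * v (Sum.inl p)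
        = if p.1 = i then v (Sum.inl p) else 0 := by
    intro p
    simp [affRow, apply_ite (aeval g), ite_mul]
  simp only [h1]
  rw [sigma_indicator_sum]
  simp [affRow]

lemma sum_tailRow (g : Vix m n → R) (v : Cix m T n → R) (i₀ i : Blk m T n) (s : Fin m) :
    ∑ c, (aeval g) (tailRow i₀ i s c) * v c
      = (∑ j, g ⟨i.1, j, s⟩ * v (Sum.inl ⟨i, j⟩))
        - ∑ j, g ⟨i₀.1, j, s⟩ * v (Sum.inl ⟨i₀, j⟩) := by
  rw [Fintype.sum_sum_type]
  have h1 : ∀ p : Σ i' : Blk m T n, Fin (n i'.1 + 1),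
      (aeval g) (tailRow i₀ i s (Sum.inl p)) * v (Sum.inl p)
        = (if p.1 = i then g ⟨p.1.1, p.2, s⟩ * v (Sum.inl p) else 0)
          - (if p.1 = i₀ then g ⟨p.1.1, p.2, s⟩ * v (Sum.inl p) else 0) := by
    intro p
    simp [tailRow, apply_ite (aeval g), ite_mul, sub_mul, aeval_X]
  simp only [h1]
  rw [Finset.sum_sub_distrib, sigma_indicator_sum, sigma_indicator_sum]
  simp [tailRow]

end Aux

section Kernel

variable {q : ℕ} {m T : ℕ} {n : Fin q → ℕ}

lemma kernel_triv (i₀ : Blk m T n) (bb : ℕ → Blk m T n) (eF : ℕ → Fin m)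
    (sOwn : Blk m T n → ℕ → Fin m)
    (H1 : ∀ r, r ≤ n i₀.1 → bb r ≠ i₀)
    (H2 : ∀ r r', r ≤ n i₀.1 → r' ≤ n i₀.1 → eF r = eF r' → r = r')
    (H3 : ∀ i : Blk m T n, i ≠ i₀ → ∀ j j' : ℕ, 1 ≤ j → j ≤ n i.1 → 1 ≤ j' → j' ≤ n i.1 →
      sOwn i j = sOwn i j' → j = j')
    (H4 : ∀ r, r ≤ n i₀.1 → ∀ j, 1 ≤ j → j ≤ n (bb r).1 → sOwn (bb r) j ≠ eF r)
    (v : Cix m T n → ℚ)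
    (hv : (Emat i₀ bb eF sOwn).map (aeval (sig i₀ bb eF sOwn)) *ᵥ v = 0) :
    v = 0 := by
  set σ := sig i₀ bb eF sOwn with hσ
  have hrow : ∀ r, ∑ c, (aeval σ) (Emat i₀ bb eF sOwn r c) * v c = 0 := by
    intro r
    have := congrFun hv r
    simpa [Matrix.mulVec, dotProduct, Matrix.map_apply] using this
  -- Step A : block i₀ entries vanish
  have hA0 : ∀ j : Fin (n i₀.1 + 1), v (Sum.inl ⟨i₀, j⟩) = 0 := by
    intro j
    have hjle : j.val ≤ n i₀.1 := Nat.lt_succ_iff.mp j.isLt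
    have hrowj : ∑ c, (aeval σ) (tailRow i₀ (bb j.val) (eF j.val) c) * v c = 0 := by
      by_cases hj : j.val = 0
      · have := hrow (Sum.inr ())
        rw [hj]
        simpa [Emat] using this
      · have := hrow (Sum.inl ⟨i₀, j⟩)
        simpa [Emat, hj, (by simpa using hj : j ≠ 0)] using this
    rw [sum_tailRow] at hrowj
    have hz1 : (∑ j', σ ⟨(bb j.val).1, j', eF j.val⟩ * v (Sum.inl ⟨bb j.val, j'⟩)) = 0 := by
      apply Finset.sum_eq_zero
      intro j' _
      have : σ ⟨(bb j.val).1, j', eF j.val⟩ = 0 := by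
        rw [hσ, sig_apply, if_neg (H1 j.val hjle)]
        rw [if_neg]
        rintro ⟨hj'1, hj'2⟩
        exact H4 j.val hjle j'.val hj'1 (Nat.lt_succ_iff.mp j'.isLt) hj'2.symm
      rw [this, zero_mul]
    have hz2 : (∑ j', σ ⟨i₀.1, j', eF j.val⟩ * v (Sum.inl ⟨i₀, j'⟩))
        = v (Sum.inl ⟨i₀, j⟩) := by
      rw [Finset.sum_eq_single j]
      · rw [hσ, sig_apply, if_pos rfl, if_pos rfl, one_mul]
      · intro j' _ hj'
        have : σ ⟨i₀.1, j', eF j.val⟩ = 0 := by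
          rw [hσ, sig_apply, if_pos rfl, if_neg]
          intro h
          exact hj' (Fin.ext (H2 j'.val j.val (Nat.lt_succ_iff.mp j'.isLt) hjle h.symm))
        rw [this, zero_mul]
      · simp
    rw [hz1, hz2] at hrowj
    linarith
  -- Step B : other blocks, j ≠ 0
  have hB : ∀ (i : Blk m T n), i ≠ i₀ → ∀ (j : Fin (n i.1 + 1)), j.val ≠ 0 →
      v (Sum.inl ⟨i, j⟩) = 0 := by
    intro i hi j hj
    have hrowj : ∑ c, (aeval σ) (tailRow i₀ i (sOwn i j.val) c) * v c = 0 := by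
      have := hrow (Sum.inl ⟨i, j⟩)
      simpa [Emat, hj, hi, (by simpa using hj : j ≠ 0)] using this
    rw [sum_tailRow] at hrowj
    have hz2 : (∑ j', σ ⟨i₀.1, j', sOwn i j.val⟩ * v (Sum.inl ⟨i₀, j'⟩)) = 0 := by
      apply Finset.sum_eq_zero
      intro j' _
      rw [hA0 j', mul_zero]
    have hz1 : (∑ j', σ ⟨i.1, j', sOwn i j.val⟩ * v (Sum.inl ⟨i, j'⟩))
        = v (Sum.inl ⟨i, j⟩) := by
      rw [Finset.sum_eq_single j]
      · rw [hσ, sig_apply, if_neg hi, if_pos ⟨Nat.one_le_iff_ne_zero.mpr hj, rfl⟩, one_mul]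
      · intro j' _ hj'
        have : σ ⟨i.1, j', sOwn i j.val⟩ = 0 := by
          rw [hσ, sig_apply, if_neg hi, if_neg]
          rintro ⟨h1, h2⟩
          exact hj' (Fin.ext (H3 i hi j'.val j.val h1 (Nat.lt_succ_iff.mp j'.isLt)
            (Nat.one_le_iff_ne_zero.mpr hj) (Nat.lt_succ_iff.mp j.isLt) h2.symm))
        rw [this, zero_mul]
      · simp
    rw [hz1, hz2] at hrowj
    linarith
  -- Step C : the b-column entry
  have hC : v (Sum.inr ()) = 0 := by
    have hrow0 : ∑ c, (aeval σ) (affRow i₀ c) * v c = 0 := by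
      have := hrow (Sum.inl ⟨i₀, 0⟩)
      simpa [Emat] using this
    rw [sum_affRow] at hrow0
    have : (∑ j, v (Sum.inl ⟨i₀, j⟩)) = 0 := Finset.sum_eq_zero (fun j _ => hA0 j)
    rw [this] at hrow0
    linarith
  -- Step D : other blocks, j = 0
  have hD : ∀ (i : Blk m T n), i ≠ i₀ → v (Sum.inl ⟨i, 0⟩) = 0 := by
    intro i hi
    have hrow0 : ∑ c, (aeval σ) (affRow i c) * v c = 0 := by
      have := hrow (Sum.inl ⟨i, 0⟩)
      simpa [Emat] using this
    rw [sum_affRow] at hrow0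
    have : (∑ j, v (Sum.inl ⟨i, j⟩)) = v (Sum.inl ⟨i, 0⟩) := by
      rw [Finset.sum_eq_single 0]
      · intro j _ hj
        exact hB i hi j (fun h => hj (Fin.ext h))
      · simp
    rw [this, hC] at hrow0
    linarith
  funext c
  rcases c with p | u
  · rcases p with ⟨i, j⟩
    by_cases hi : i = i₀
    · subst hi; exact hA0 j
    · by_cases hj : j.val = 0
      · have : j = 0 := Fin.ext hj
        rw [this]
        exact hD i hi
    
      · exact hB i hi j hj
  · rcases u; exact hC

end Kernel

section Eval

variable {q : ℕ} {m T : ℕ} {n : Fin q → ℕ}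

lemma evalA (i₀ : Blk m T n) (bb : ℕ → Blk m T n) (eF : ℕ → Fin m)
    (sOwn : Blk m T n → ℕ → Fin m)
    (HTe : ∀ r, T ≤ (eF r).val) (HTs : ∀ i j, T ≤ (sOwn i j).val)
    (g : Vix m n → ℝ) (lam : ∀ i : Fin q, Fin (n i + 1) → ℝ)
    (hlam : ∀ i, ∑ j, lam i j = 1)
    (htail : ∀ (i i' : Fin q) (s : Fin m), T ≤ s.val →
      ∑ j, g ⟨i, j, s⟩ * lam i j = ∑ j, g ⟨i', j, s⟩ * lam i' j) :
    (Emat i₀ bb eF sOwn).map (aeval g) *ᵥ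
      (Sum.elim (fun p : Σ i : Blk m T n, Fin (n i.1 + 1) => lam p.1.1 p.2)
        (fun _ => -1)) = 0 := by
  set w : Cix m T n → ℝ := Sum.elim (fun p : Σ i : Blk m T n, Fin (n i.1 + 1) => lam p.1.1 p.2)
    (fun _ => -1) with hw
  have htr : ∀ (i : Blk m T n) (s : Fin m), T ≤ s.val →
      ∑ c, (aeval g) (tailRow i₀ i s c) * w c = 0 := by
    intro i s hs
    rw [sum_tailRow]
    have e1 : (∑ j, g ⟨i.1, j, s⟩ * w (Sum.inl ⟨i, j⟩)) = ∑ j, g ⟨i.1, j, s⟩ * lam i.1 j := rfl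
    have e2 : (∑ j, g ⟨i₀.1, j, s⟩ * w (Sum.inl ⟨i₀, j⟩)) = ∑ j, g ⟨i₀.1, j, s⟩ * lam i₀.1 j := rfl
    rw [e1, e2, htail i.1 i₀.1 s hs, sub_self]
  have haf : ∀ i : Blk m T n, ∑ c, (aeval g) (affRow i c) * w c = 0 := by
    intro i
    rw [sum_affRow]
    have e1 : (∑ j, w (Sum.inl ⟨i, j⟩)) = ∑ j, lam i.1 j := rfl
    rw [e1, hlam i.1]
    simp [hw]
  funext r
  have hgoal : ∑ c, (aeval g) (Emat i₀ bb eF sOwn r c) * w c = 0 := by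
    rcases r with p | u
    · rcases p with ⟨i, j⟩
      by_cases hj : j.val = 0
      · have hE : ∀ c, Emat i₀ bb eF sOwn (Sum.inl ⟨i, j⟩) c = affRow i c := by
          intro c; simp [Emat, hj, (by simpa using hj : j = 0)]
        simp only [hE]; exact haf i
      · by_cases hi : i = i₀
        · have hE : ∀ c, Emat i₀ bb eF sOwn (Sum.inl ⟨i, j⟩) c
              = tailRow i₀ (bb j.val) (eF j.val) c := by
            intro c; simp [Emat, hj, hi, (by simpa using hj : j ≠ 0)]
          simp only [hE]; exact htr _ _ (HTe j.val)
        · have hE : ∀ c, Emat i₀ bb eF sOwn (Sum.inl ⟨i, j⟩) c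
              = tailRow i₀ i (sOwn i j.val) c := by
            intro c; simp [Emat, hj, hi, (by simpa using hj : j ≠ 0)]
          simp only [hE]; exact htr _ _ (HTs i j.val)
    · exact htr _ _ (HTe 0)
  simpa [Matrix.mulVec, dotProduct, Matrix.map_apply] using hgoal

lemma core_contradiction (A : ∀ i : Fin q, Fin (n i + 1) → Fin m → ℝ)
    (hA : AlgebraicIndependent ℚ
      (fun p : Σ i : Fin q, Fin (n i + 1) × Fin m => A p.1 p.2.1 p.2.2))
    (lam : ∀ i : Fin q, Fin (n i + 1) → ℝ)
    (hlam : ∀ i, ∑ j, lam i j = 1)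
    (htail : ∀ (i i' : Fin q) (s : Fin m), T ≤ s.val →
      ∑ j, A i j s * lam i j = ∑ j, A i' j s * lam i' j)
    (i₀ : Blk m T n) (bb : ℕ → Blk m T n) (eF : ℕ → Fin m)
    (sOwn : Blk m T n → ℕ → Fin m)
    (H1 : ∀ r, r ≤ n i₀.1 → bb r ≠ i₀)
    (H2 : ∀ r r', r ≤ n i₀.1 → r' ≤ n i₀.1 → eF r = eF r' → r = r')
    (H3 : ∀ i : Blk m T n, i ≠ i₀ → ∀ j j' : ℕ, 1 ≤ j → j ≤ n i.1 → 1 ≤ j' → j' ≤ n i.1 →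
      sOwn i j = sOwn i j' → j = j')
    (H4 : ∀ r, r ≤ n i₀.1 → ∀ j, 1 ≤ j → j ≤ n (bb r).1 → sOwn (bb r) j ≠ eF r)
    (HTe : ∀ r, T ≤ (eF r).val) (HTs : ∀ i j, T ≤ (sOwn i j).val) : False := by
  classical
  set E := Emat i₀ bb eF sOwn with hE
  set g : Vix m n → ℝ := fun p => A p.1 p.2.1 p.2.2 with hg
  set w : Cix m T n → ℝ := Sum.elim (fun p : Σ i : Blk m T n, Fin (n i.1 + 1) => lam p.1.1 p.2)
    (fun _ => -1) with hw
  have hwne : w ≠ 0 := by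
    intro h
    have := congrFun h (Sum.inr ())
    simp [hw] at this
  have hdet0 : (aeval g) E.det = 0 := by
    rw [AlgHom.map_det]
    apply Matrix.exists_mulVec_eq_zero_iff.mp
    refine ⟨w, hwne, ?_⟩
    have := evalA i₀ bb eF sOwn HTe HTs g lam hlam (fun i i' s hs => htail i i' s hs)
    simpa [AlgHom.mapMatrix_apply] using this
  have hdetσ : (aeval (sig i₀ bb eF sOwn)) E.det ≠ 0 := by
    rw [AlgHom.map_det]
    intro h
    obtain ⟨v, hv0, hvv⟩ := Matrix.exists_mulVec_eq_zero_iff.mpr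
      (by simpa [AlgHom.mapMatrix_apply] using h)
    refine hv0 (kernel_triv i₀ bb eF sOwn H1 H2 H3 H4 v ?_)
    simpa [AlgHom.mapMatrix_apply] using hvv
  have hEdet : E.det ≠ 0 := by
    intro h
    rw [h, map_zero] at hdetσ
    exact hdetσ rfl
  have hinj := algebraicIndependent_iff_injective_aeval.mp hA
  exact hEdet (hinj (by rw [hdet0, map_zero]))

end Eval


lemma pack {ι : Type*} [Fintype ι] [DecidableEq ι] (c : ι → ℕ) (K : ℕ)
    (hK : K ≤ ∑ i, c i) :
    ∃ f : Fin K → ι, ∀ i, (Finset.univ.filter fun r => f r = i).card ≤ c i := by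
  have h1 : Fintype.card (Fin K) ≤ Fintype.card (Σ i : ι, Fin (c i)) := by
    simpa using hK
  obtain ⟨g⟩ := Function.Embedding.nonempty_of_card_le h1
  refine ⟨fun r => (g r).1, fun i => ?_⟩
  have : ((Finset.univ.filter fun r => (g r).1 = i)).card ≤ (Finset.range (c i)).card := by
    apply Finset.card_le_card_of_injOn (fun r => (g r).2.val)
    · intro r hr
      simp only [Finset.mem_coe, Finset.mem_filter] at hr
      simp only [Finset.mem_coe, Finset.mem_range]
      calc ((g r).2.val) < c (g r).1 := (g r).2.isLt
        _ = c i := by rw [hr.2]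
    · intro r hr r' hr' hval
      simp only [Finset.coe_filter, Set.mem_setOf_eq] at hr hr'
      apply g.injective
      have hfst : (g r).1 = (g r').1 := by rw [hr.2, hr'.2]
      exact Sigma.ext hfst ((Fin.heq_ext_iff (by rw [hfst])).mpr hval)
  simpa using this

set_option maxHeartbeats 1600000 in
lemma choice_exists {q m T : ℕ} {n : Fin q → ℕ} (hTm : T ≤ m)
    (hsum : (∑ i, (n i : ℤ)) + 1 ≤ ((m : ℤ) - T) * ((q : ℤ) - 1)) :
    ∃ (i₀ : Blk m T n) (bb : ℕ → Blk m T n) (eF : ℕ → Fin m) (sOwn : Blk m T n → ℕ → Fin m),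
      (∀ r, r ≤ n i₀.1 → bb r ≠ i₀) ∧
      (∀ r r', r ≤ n i₀.1 → r' ≤ n i₀.1 → eF r = eF r' → r = r') ∧
      (∀ i : Blk m T n, i ≠ i₀ → ∀ j j' : ℕ, 1 ≤ j → j ≤ n i.1 → 1 ≤ j' → j' ≤ n i.1 →
        sOwn i j = sOwn i j' → j = j') ∧
      (∀ r, r ≤ n i₀.1 → ∀ j, 1 ≤ j → j ≤ n (bb r).1 → sOwn (bb r) j ≠ eF r) ∧
      (∀ r, T ≤ (eF r).val) ∧ (∀ i j, T ≤ (sOwn i j).val) := by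
  classical
  -- integer arithmetic facts
  have hMT : ((m - T : ℕ) : ℤ) = (m : ℤ) - T := by
    push_cast [Nat.cast_sub hTm]; ring
  set Iq : Finset (Fin q) := Finset.univ.filter (fun i => n i ≤ m - T) with hIq
  have hsplit : (∑ i ∈ Iq, (n i : ℤ)) + ∑ i ∈ Finset.univ.filter (fun i => ¬ (n i ≤ m - T)), (n i : ℤ)
      = ∑ i : Fin q, (n i : ℤ) := Finset.sum_filter_add_sum_filter_not _ _ _
  have hcompl : ∀ i ∈ Finset.univ.filter (fun i => ¬ (n i ≤ m - T)), ((m - T : ℕ) : ℤ) + 1 ≤ (n i : ℤ) := by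
    intro i hi
    simp only [Finset.mem_filter, not_le] at hi
    exact_mod_cast hi.2
  have hcompl_sum : ((Finset.univ.filter (fun i => ¬ (n i ≤ m - T))).card : ℤ) * (((m - T : ℕ) : ℤ) + 1)
      ≤ ∑ i ∈ Finset.univ.filter (fun i => ¬ (n i ≤ m - T)), (n i : ℤ) := by
    have := Finset.card_nsmul_le_sum (Finset.univ.filter (fun i => ¬ (n i ≤ m - T)))
      (fun i => (n i : ℤ)) (((m - T : ℕ) : ℤ) + 1) hcompl
    simpa [nsmul_eq_mul] using this
  have hcards : Iq.card + (Finset.univ.filter (fun i => ¬ (n i ≤ m - T))).card = q := by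
    rw [hIq]
    rw [Finset.card_filter_add_card_filter_not]
    simp
  have hM0 : (0 : ℤ) ≤ ((m - T : ℕ) : ℤ) := Int.ofNat_nonneg _
  have key : (∑ i ∈ Iq, (n i : ℤ)) + 1 ≤ ((m - T : ℕ) : ℤ) * ((Iq.card : ℤ) - 1) := by
    have hq : (Iq.card : ℤ) + ((Finset.univ.filter (fun i => ¬ (n i ≤ m - T))).card : ℤ) = q := by
      exact_mod_cast hcards
    have hKc0 : (0 : ℤ) ≤ ((Finset.univ.filter (fun i => ¬ (n i ≤ m - T))).card : ℤ) := Int.ofNat_nonneg _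
    rw [hMT]
    nlinarith [hsum, hcompl_sum, hsplit]
  have hIqnn : (0 : ℤ) ≤ ∑ i ∈ Iq, (n i : ℤ) :=
    Finset.sum_nonneg (fun i _ => Int.ofNat_nonneg _)
  have hL1 : 1 ≤ Iq.card := by
    by_contra h
    push_neg at h
    interval_cases h' : Iq.card
    · simp [h'] at key; nlinarith
  have hIqne : Iq.Nonempty := Finset.card_pos.mp hL1
  obtain ⟨i₀f, hi₀mem, hi₀min⟩ := Finset.exists_min_image Iq n hIqne
  have hi₀le : n i₀f ≤ m - T := (Finset.mem_filter.mp hi₀mem).2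
  set i₀ : Blk m T n := ⟨i₀f, hi₀le⟩ with hi₀
  -- n i₀ + 1 ≤ m - T
  have hmin_sum : (Iq.card : ℤ) * (n i₀f : ℤ) ≤ ∑ i ∈ Iq, (n i : ℤ) := by
    have := Finset.card_nsmul_le_sum Iq (fun i => (n i : ℤ)) ((n i₀f : ℤ))
      (fun i hi => by simpa using Int.ofNat_le.mpr (hi₀min i hi))
    simpa [nsmul_eq_mul] using this
  have hn0M : n i₀f + 1 ≤ m - T := by
    by_contra h
    push_neg at h
    have h' : ((m - T : ℕ) : ℤ) ≤ (n i₀f : ℤ) := by exact_mod_cast Nat.lt_succ_iff.mp h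
    have hL1' : (1 : ℤ) ≤ (Iq.card : ℤ) := by exact_mod_cast hL1
    nlinarith [key, hmin_sum]
  -- sum of slacks over blocks other than i₀
  have hsubsum : ∑ i : Blk m T n, (n i.1 : ℤ) = ∑ i ∈ Iq, (n i : ℤ) := by
    rw [hIq]
    exact (Finset.sum_subtype _ (by intro x; simp) (fun i => (n i : ℤ))).symm
  have hcardBlk : (Fintype.card (Blk m T n) : ℤ) = (Iq.card : ℤ) := by
    rw [hIq]
    norm_cast
    exact Fintype.card_subtype _
  have hKsumZ : ((n i₀f : ℤ) + 1) ≤ ∑ x : {i : Blk m T n // i ≠ i₀}, (((m - T : ℕ) : ℤ) - (n x.1.1 : ℤ)) := by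
    have e1 : ∑ x : {i : Blk m T n // i ≠ i₀}, (((m - T : ℕ) : ℤ) - (n x.1.1 : ℤ))
        = ∑ i ∈ (Finset.univ : Finset (Blk m T n)).erase i₀, (((m - T : ℕ) : ℤ) - (n i.1 : ℤ)) := by
      exact (Finset.sum_subtype ((Finset.univ : Finset (Blk m T n)).erase i₀)
        (by intro x; simp) (fun i => (((m - T : ℕ) : ℤ) - (n i.1 : ℤ)))).symm
    have e2 : ∑ i ∈ (Finset.univ : Finset (Blk m T n)).erase i₀, (((m - T : ℕ) : ℤ) - (n i.1 : ℤ))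
        = (∑ i : Blk m T n, (((m - T : ℕ) : ℤ) - (n i.1 : ℤ))) - (((m - T : ℕ) : ℤ) - (n i₀f : ℤ)) := by
      rw [Finset.sum_erase_eq_sub (Finset.mem_univ i₀)]
    have e3 : ∑ i : Blk m T n, (((m - T : ℕ) : ℤ) - (n i.1 : ℤ))
        = (Fintype.card (Blk m T n) : ℤ) * ((m - T : ℕ) : ℤ) - ∑ i : Blk m T n, (n i.1 : ℤ) := by
      rw [Finset.sum_sub_distrib]
      simp [Finset.card_univ, mul_comm]
    rw [e1, e2, e3, hsubsum, hcardBlk]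
    nlinarith [key]
  have hKsum : n i₀f + 1 ≤ ∑ x : {i : Blk m T n // i ≠ i₀}, ((m - T) - n x.1.1) := by
    have hc : ((∑ x : {i : Blk m T n // i ≠ i₀}, ((m - T) - n x.1.1) : ℕ) : ℤ)
        = ∑ x : {i : Blk m T n // i ≠ i₀}, (((m - T : ℕ) : ℤ) - (n x.1.1 : ℤ)) := by
      rw [Nat.cast_sum]
      refine Finset.sum_congr rfl (fun x _ => ?_)
      rw [Nat.cast_sub x.1.2]
    rw [← hc] at hKsumZ
    exact_mod_cast hKsumZ
  -- pack the extra rows into blocks with slack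
  obtain ⟨f, hf⟩ := pack (fun x : {i : Blk m T n // i ≠ i₀} => (m - T) - n x.1.1) (n i₀f + 1) hKsum
  have hTm' : T < m := by omega
  set eF : ℕ → Fin m := fun r => ⟨T + min r (n i₀f), by omega⟩ with heF
  set bb : ℕ → Blk m T n := fun r => (f ⟨min r (n i₀f), by omega⟩).1 with hbb
  set Ex : Blk m T n → Finset (Fin m) := fun i =>
    (Finset.univ.filter (fun r : Fin (n i₀f + 1) => (f r).1 = i)).image (fun r => eF r.val) with hEx
  set Pool : Finset (Fin m) :=
    (Finset.range (m - T)).image (fun k => (⟨T + min k (m - T - 1), by omega⟩ : Fin m)) with hPool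
  have hPoolmem : ∀ s ∈ Pool, T ≤ (s : Fin m).val := by
    intro s hs
    rw [hPool] at hs
    obtain ⟨k, _, rfl⟩ := Finset.mem_image.mp hs
    exact Nat.le_add_right _ _
  have hPoolcard : Pool.card = m - T := by
    rw [hPool, Finset.card_image_of_injOn, Finset.card_range]
    intro k hk k' hk' hkk
    simp only [Finset.coe_range, Set.mem_Iio] at hk hk'
    have : T + min k (m - T - 1) = T + min k' (m - T - 1) := congrArg Fin.val hkk
    omega
  have hExcard : ∀ i : Blk m T n, i ≠ i₀ → (Ex i).card ≤ (m - T) - n i.1 := by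
    intro i hne
    rw [hEx]
    calc ((Finset.univ.filter (fun r : Fin (n i₀f + 1) => (f r).1 = i)).image
          (fun r => eF r.val)).card
        ≤ (Finset.univ.filter (fun r : Fin (n i₀f + 1) => (f r).1 = i)).card :=
          Finset.card_image_le
      _ = (Finset.univ.filter (fun r : Fin (n i₀f + 1) => f r = ⟨i, hne⟩)).card := by
          congr 1
          apply Finset.filter_congr
          intro r _
          simp [Subtype.ext_iff]
      _ ≤ (m - T) - n i.1 := hf ⟨i, hne⟩
  have hSicard : ∀ i : Blk m T n, i ≠ i₀ → n i.1 ≤ (Pool \ Ex i).card := by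
    intro i hne
    have h1 := Finset.card_le_card_sdiff_add_card (s := Pool) (t := Ex i)
    have h2 := hExcard i hne
    have hni : n i.1 ≤ m - T := i.2
    omega
  set sOwn : Blk m T n → ℕ → Fin m := fun i j =>
    if h : j - 1 < n i.1 ∧ n i.1 ≤ (Pool \ Ex i).card then
      (Pool \ Ex i).orderEmbOfCardLe h.2 ⟨j - 1, h.1⟩
    else ⟨T, hTm'⟩ with hsOwn
  refine ⟨i₀, bb, eF, sOwn, ?_, ?_, ?_, ?_, ?_, ?_⟩
  · -- H1
    intro r _
    simp only [hbb]
    exact (f ⟨min r (n i₀f), by omega⟩).2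
  · -- H2
    intro r r' hr hr' h
    have hr2 : r ≤ n i₀f := hr
    have hr2' : r' ≤ n i₀f := hr'
    have h2 : T + min r (n i₀f) = T + min r' (n i₀f) := congrArg Fin.val h
    omega
  · -- H3
    intro i hne j j' h1 h2 h3 h4 heq
    have hc : j - 1 < n i.1 ∧ n i.1 ≤ (Pool \ Ex i).card := ⟨by omega, hSicard i hne⟩
    have hc' : j' - 1 < n i.1 ∧ n i.1 ≤ (Pool \ Ex i).card := ⟨by omega, hSicard i hne⟩
    simp only [hsOwn, dif_pos hc, dif_pos hc'] at heq
    have h5 := ((Pool \ Ex i).orderEmbOfCardLe hc.2).injective heq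
    have h6 : j - 1 = j' - 1 := congrArg Fin.val h5
    omega
  · -- H4
    intro r hr j h1 h2
    have hr2 : r ≤ n i₀f := hr
    have hbne : bb r ≠ i₀ := by
      simp only [hbb]; exact (f ⟨min r (n i₀f), by omega⟩).2
    have hc : j - 1 < n (bb r).1 ∧ n (bb r).1 ≤ (Pool \ Ex (bb r)).card :=
      ⟨by omega, hSicard _ hbne⟩
    have hmem := (Pool \ Ex (bb r)).orderEmbOfCardLe_mem hc.2 ⟨j - 1, hc.1⟩
    have hnotin : ((Pool \ Ex (bb r)).orderEmbOfCardLe hc.2 ⟨j - 1, hc.1⟩) ∉ Ex (bb r) :=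
      (Finset.mem_sdiff.mp hmem).2
    have hin : eF r ∈ Ex (bb r) := by
      rw [hEx]
      apply Finset.mem_image.mpr
      refine ⟨⟨r, by omega⟩, ?_, rfl⟩
      apply Finset.mem_filter.mpr
      refine ⟨Finset.mem_univ _, ?_⟩
      have : (⟨r, by omega⟩ : Fin (n i₀f + 1)) = ⟨min r (n i₀f), by omega⟩ := by
        apply Fin.ext
        simp only
        omega
      rw [this, hbb]
    intro hEq
    simp only [hsOwn] at hEq
    rw [dif_pos hc] at hEq
    rw [hEq] at hnotin
    exact hnotin hin
  · -- HTe
    intro r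
    exact Nat.le_add_right _ _
  · -- HTs
    intro i j
    simp only [hsOwn]
    by_cases h : j - 1 < n i.1 ∧ n i.1 ≤ (Pool \ Ex i).card
    · rw [dif_pos h]
      have hmem := (Pool \ Ex i).orderEmbOfCardLe_mem h.2 ⟨j - 1, h.1⟩
      exact hPoolmem _ (Finset.mem_sdiff.mp hmem).1
    · rw [dif_neg h]


/-- Theorem 1.1, second case: if the coordinates of the points `A i j` are algebraically
independent over `ℚ`, `P` is a `d`-plane parallel to the pair of coordinate planes
`Π^t ⊂ Π^T`, `q ≤ d − t + 1` and `n₁ + ⋯ + n_q + 1 ≤ (m − T)(q − 1)`,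
then `P` misses the affine hull of some `M_i`. -/
theorem stmt4 (m q d t T : ℕ) (hq : 1 ≤ q) (n : Fin q → ℕ)
    (A : ∀ i : Fin q, Fin (n i + 1) → (Fin m → ℝ))
    (hA : AlgebraicIndependent ℚ
      (fun p : Σ i : Fin q, Fin (n i + 1) × Fin m => A p.1 p.2.1 p.2.2))
    (htd : t ≤ d) (hdT : d ≤ T) (hTm : T ≤ m)
    (P : AffineSubspace ℝ (Fin m → ℝ))
    (hne : (P : Set (Fin m → ℝ)).Nonempty)
    (hdim : Module.finrank ℝ P.direction = d)
    (hpart : coordSub m t ≤ P.direction)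
    (hparT : P.direction ≤ coordSub m T)
    (hqd : q ≤ d - t + 1)
    (hsum : (∑ i, (n i : ℤ)) + 1 ≤ ((m : ℤ) - T) * ((q : ℤ) - 1)) :
    ∃ i, (P : Set (Fin m → ℝ)) ∩
      (affineSpan ℝ (Set.range (A i)) : Set (Fin m → ℝ)) = ∅ := by
  by_contra hcon
  push_neg at hcon
  have hx : ∀ i, ((P : Set (Fin m → ℝ)) ∩
      (affineSpan ℝ (Set.range (A i)) : Set (Fin m → ℝ))).Nonempty :=
    fun i => hcon i
  choose x hxmem using hx
  have hxP : ∀ i, x i ∈ (P : Set (Fin m → ℝ)) := fun i => (hxmem i).1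
  have hxA : ∀ i, x i ∈ affineSpan ℝ (Set.range (A i)) := fun i => (hxmem i).2
  have hw : ∀ i, ∃ w : Fin (n i + 1) → ℝ, (∑ j, w j = 1) ∧ x i = ∑ j, w j • A i j := by
    intro i
    obtain ⟨w, hw1, hw2⟩ := eq_affineCombination_of_mem_affineSpan_of_fintype (hxA i)
    refine ⟨w, hw1, ?_⟩
    rw [hw2, Finset.univ.affineCombination_eq_linear_combination _ _ hw1]
  choose lam hlam1 hlam2 using hw
  have hcoord : ∀ (i : Fin q) (s : Fin m), x i s = ∑ j, A i j s * lam i j := by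
    intro i s
    rw [hlam2 i]
    rw [Finset.sum_apply]
    exact Finset.sum_congr rfl (fun j _ => by simp [mul_comm])
  have htail : ∀ (i i' : Fin q) (s : Fin m), T ≤ s.val →
      ∑ j, A i j s * lam i j = ∑ j, A i' j s * lam i' j := by
    intro i i' s hs
    have hd : x i - x i' ∈ coordSub m T :=
      hparT (AffineSubspace.vsub_mem_direction (hxP i) (hxP i'))
    have h0 : (x i - x i') s = 0 := hd s hs
    have h1 : x i s - x i' s = 0 := h0
    rw [hcoord i s, hcoord i' s] at h1
    linarith
  obtain ⟨i₀, bb, eF, sOwn, H1, H2, H3, H4, HTe, HTs⟩ :=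
    choice_exists (n := n) (m := m) (T := T) hTm hsum
  exact core_contradiction A hA lam hlam1 htail i₀ bb eF sOwn H1 H2 H3 H4 HTe HTs
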